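/- Assume conditions (9). Define the linear map S : ℝ² → ℝ² by S(x,y) = ((k1·n1·x + e1·y)/e1, x/e1) and the quadratic vector field G1(x,y) = (y + k1·n1·x² − (k1²n1² + e1·k1·n1 − 1)·x·y − k1·n1·y², −x − e1·x·y). Then for all (x,y) ∈ ℝ², S(Z1(x+1, y+1)) = G1(S(x,y)); that is, after translating the equilibrium (1,1) to the origin, the linear change S conjugates the competitive system Z1 to the normal form G1. -/
import Mathlib


/-- The competitive resource–consumer system `Z1`. -/
noncomputable def Z1 (k1 n1 e1 p1 s1 w1 h1 : ℝ) (p : ℝ × ℝ) : ℝ × ℝ :=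
  (p.1 * (k1 * (1 - n1 * p.1) - e1 * p.2 - w1),
   p.2 * (e1 * p1 * p.1 - s1 * p.2 - h1))

/-- The linear change `S(x,y) = ((k1·n1·x + e1·y)/e1, x/e1)`. -/
noncomputable def Smap (k1 n1 e1 : ℝ) (p : ℝ × ℝ) : ℝ × ℝ :=
  ((k1 * n1 * p.1 + e1 * p.2) / e1, p.1 / e1)

/-- The quadratic normal form `G1`. -/
noncomputable def G1 (k1 n1 e1 : ℝ) (p : ℝ × ℝ) : ℝ × ℝ :=
  (p.2 + k1 * n1 * p.1 ^ 2
      - (k1 ^ 2 * n1 ^ 2 + e1 * k1 * n1 - 1) * p.1 * p.2 - k1 * n1 * p.2 ^ 2,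
   -p.1 - e1 * p.1 * p.2)

/-- Under conditions (9), after translating `(1,1)` to the origin, the linear change `S`
conjugates the competitive system `Z1` to the normal form `G1`. -/
theorem stmt5 (k1 n1 e1 p1 s1 w1 h1 : ℝ)
    (he : e1 ≠ 0)
    (hh : h1 = (k1 ^ 2 * n1 ^ 2 + e1 * k1 * n1 + 1) / e1)
    (hp : p1 = (k1 ^ 2 * n1 ^ 2 + 1) / e1 ^ 2)
    (hs : s1 = -(k1 * n1))
    (hw : w1 = -(k1 * n1) - e1 + k1) :
    ∀ p : ℝ × ℝ,
      Smap k1 n1 e1 (Z1 k1 n1 e1 p1 s1 w1 h1 (p.1 + 1, p.2 + 1))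
        = G1 k1 n1 e1 (Smap k1 n1 e1 p) := by
  intro p
  simp only [Smap, Z1, G1, hh, hp, hs, hw]
  rw [Prod.mk.injEq]
  constructor <;> field_simp <;> ring
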